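/- Let m1, m2 be positive integers with gcd(m1,m2)=1 and m2 even. The set of self-intersection points of the closed curve ℓ(t), t ∈ [0,2π), has exactly m2(m1 − 1) + 2 elements: the two poles (0,0,±1), each traversed m2 times per period, and m2(m1 − 1) non-polar double points, each traversed exactly twice. -/

import Mathlib

open Real

noncomputable def lissajous (m1 m2 : ℕ) (α : ℝ) (t : ℝ) : ℝ × ℝ × ℝ :=
  (Real.sin (m2 * t) * Real.cos (m1 * t - α * π),
   Real.sin (m2 * t) * Real.sin (m1 * t - α * π),
   Real.cos (m2 * t))

/-- The set of parameters in one period mapping to a given point. -/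
def paramSet (m1 m2 : ℕ) (α : ℝ) (x : ℝ × ℝ × ℝ) : Set ℝ :=
  {s ∈ Set.Ico (0:ℝ) (2 * π) | lissajous m1 m2 α s = x}

/-- The set of self-intersection points of the curve over one period. -/
def selfIntersections (m1 m2 : ℕ) (α : ℝ) : Set (ℝ × ℝ × ℝ) :=
  {x | (∃ t ∈ Set.Ico (0:ℝ) (2 * π), lissajous m1 m2 α t = x) ∧
       2 ≤ Set.ncard (paramSet m1 m2 α x)}

namespace LissAux

lemma sin_two_pi_int (k : ℤ) : Real.sin (2 * π * k) = 0 := by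
  have : 2 * π * (k:ℝ) = k * π + k * π := by ring
  rw [this, Real.sin_add, Real.sin_int_mul_pi]; ring

lemma cos_two_pi_int (k : ℤ) : Real.cos (2 * π * k) = 1 := by
  have : 2 * π * (k:ℝ) = k * (2 * π) := by ring
  rw [this, Real.cos_int_mul_two_pi]

lemma cos_sin_inj {a b : ℝ} (hc : cos a = cos b) (hs : sin a = sin b) :
    ∃ n : ℤ, a - b = 2 * π * n := by
  rcases Real.cos_eq_cos_iff.1 hc with ⟨k, hk | hk⟩
  · exact ⟨-k, by rw [hk]; push_cast; ring⟩
  · have h1 : sin b = - sin a := by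
      rw [hk, Real.sin_sub]
      have e : 2 * (k:ℝ) * π = 2 * π * k := by ring
      rw [e, sin_two_pi_int, cos_two_pi_int]; ring
    have h2 : sin a = 0 := by linarith [hs.trans h1]
    rcases Real.sin_eq_zero_iff.1 h2 with ⟨n, hn⟩
    exact ⟨n - k, by rw [hk, ← hn]; push_cast; ring⟩

/-- Uniqueness in a fundamental domain. -/
lemma Ico_unique {s t : ℝ} (hs : s ∈ Set.Ico (0:ℝ) (2*π)) (ht : t ∈ Set.Ico (0:ℝ) (2*π))
    (h : ∃ k : ℤ, s - t = 2 * π * k) : s = t := by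
  obtain ⟨k, hk⟩ := h
  have hpi := Real.pi_pos
  have h1 : |s - t| < 2 * π := by
    rw [abs_lt]; constructor <;> [linarith [hs.1, ht.2]; linarith [hs.2, ht.1]]
  have h2 : |(k:ℝ)| < 1 := by
    rw [hk] at h1
    rw [abs_mul, abs_of_pos (by linarith : (0:ℝ) < 2*π)] at h1
    nlinarith [abs_nonneg ((k:ℝ))]
  have h3 : k = 0 := by
    have h4 : ((|k|:ℤ):ℝ) < 1 := by rw [Int.cast_abs]; exact h2
    have h5 : |k| < 1 := by exact_mod_cast h4
    exact Int.abs_lt_one_iff.mp h5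
  rw [h3] at hk; push_cast at hk; linarith

lemma periodic (m1 m2 : ℕ) (α t : ℝ) (k : ℤ) :
    lissajous m1 m2 α (t + 2*π*k) = lissajous m1 m2 α t := by
  simp only [lissajous, Prod.mk.injEq]
  have h2 : (m2:ℝ) * (t + 2*π*k) = m2*t + (m2*k) * (2*π) := by push_cast; ring
  have h1 : (m1:ℝ) * (t + 2*π*k) - α*π = (m1*t - α*π) + (m1*k) * (2*π) := by push_cast; ring
  rw [h2, h1]
  rw [show ((m2:ℝ)*t + (↑m2*↑k)*(2*π)) = m2*t + ((m2*k : ℤ):ℝ)*(2*π) by push_cast; ring]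
  rw [show ((m1:ℝ)*t - α*π + (↑m1*↑k)*(2*π)) = (m1*t - α*π) + ((m1*k : ℤ):ℝ)*(2*π) by push_cast; ring]
  rw [Real.sin_add_int_mul_two_pi, Real.cos_add_int_mul_two_pi, Real.sin_add_int_mul_two_pi,
    Real.cos_add_int_mul_two_pi]
  exact ⟨rfl, rfl, rfl⟩

section Main

variable {m1 m2 : ℕ} (hm1 : 0 < m1) (hm2 : 0 < m2)
  (hgcd : Nat.gcd m1 m2 = 1) (heven : Even m2) (α : ℝ)

lemma gcd_step (hm1 : 0 < m1) (hgcd : Nat.gcd m1 m2 = 1) (x : ℝ)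
    (h1 : ∃ a : ℤ, (m1:ℝ) * x = 2*π*a) (h2 : ∃ b : ℤ, (m2:ℝ) * x = 2*π*b) :
    ∃ c : ℤ, x = 2*π*c := by
  obtain ⟨a, ha⟩ := h1
  obtain ⟨b, hb⟩ := h2
  have hpi := Real.pi_ne_zero
  have key : (a:ℝ) * m2 = b * m1 := by
    have h3 : (m2:ℝ) * ((m1:ℝ)*x) = (m1:ℝ) * ((m2:ℝ)*x) := by ring
    rw [ha, hb] at h3
    have hpi2 : (0:ℝ) < π := Real.pi_pos
    nlinarith [h3]
  have keyz : a * (m2:ℤ) = b * m1 := by exact_mod_cast key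
  have hcop : IsCoprime (m1:ℤ) (m2:ℤ) := Nat.isCoprime_iff_coprime.2 hgcd
  have hdvd : (m1:ℤ) ∣ a := by
    have : (m1:ℤ) ∣ a * m2 := ⟨b, by linarith [keyz]⟩
    exact hcop.dvd_of_dvd_mul_right this
  obtain ⟨c, hc⟩ := hdvd
  refine ⟨c, ?_⟩
  have hm1r : (m1:ℝ) ≠ 0 := by exact_mod_cast hm1.ne'
  have : (m1:ℝ) * x = (m1:ℝ) * (2*π*c) := by
    rw [ha, hc]; push_cast; ring
  exact mul_left_cancel₀ hm1r this


noncomputable def fpar (m1 m2 N : ℕ) : ℝ := π * N / (m1 * m2)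

lemma fpar_mem (hm1 : 0 < m1) (hm2 : 0 < m2) {N : ℕ} (hN : N < 2*m1*m2) :
    fpar m1 m2 N ∈ Set.Ico (0:ℝ) (2*π) := by
  have hpi := Real.pi_pos
  have hK : (0:ℝ) < (m1:ℝ)*(m2:ℝ) := by
    have : (0:ℝ) < (m1:ℝ) := by exact_mod_cast hm1
    have : (0:ℝ) < (m2:ℝ) := by exact_mod_cast hm2
    positivity
  constructor
  · unfold fpar; positivity
  · unfold fpar
    rw [div_lt_iff₀ hK]
    have hNr : (N:ℝ) < 2*m1*m2 := by exact_mod_cast hN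
    nlinarith

lemma fpar_inj (hm1 : 0 < m1) (hm2 : 0 < m2) {N N' : ℕ}
    (h : fpar m1 m2 N = fpar m1 m2 N') : N = N' := by
  have hpi := Real.pi_pos
  have h1 : (0:ℝ) < (m1:ℝ) := by exact_mod_cast hm1
  have h2 : (0:ℝ) < (m2:ℝ) := by exact_mod_cast hm2
  unfold fpar at h
  field_simp at h
  exact_mod_cast (by linarith [h] : (N:ℝ) = N')

lemma m2_fpar (hm1 : 0 < m1) (hm2 : 0 < m2) (N : ℕ) :
    (m2:ℝ) * fpar m1 m2 N = π * N / m1 := by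
  have h1 : (m1:ℝ) ≠ 0 := by exact_mod_cast hm1.ne'
  have h2 : (m2:ℝ) ≠ 0 := by exact_mod_cast hm2.ne'
  unfold fpar; field_simp

lemma sin_m2_fpar_ne (hm1 : 0 < m1) (hm2 : 0 < m2) {N : ℕ} (hnd : ¬ m1 ∣ N) :
    Real.sin ((m2:ℝ) * fpar m1 m2 N) ≠ 0 := by
  rw [m2_fpar hm1 hm2]
  intro h
  obtain ⟨c, hc⟩ := Real.sin_eq_zero_iff.1 h
  have h1 : (m1:ℝ) ≠ 0 := by exact_mod_cast hm1.ne'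
  have hpi := Real.pi_ne_zero
  have : (N:ℝ) = c * m1 := by
    field_simp at hc
    have h3 : π * (N:ℝ) = π * (c * m1) := by rw [hc]
    exact mul_left_cancel₀ hpi h3
  have hz : (N:ℤ) = c * m1 := by exact_mod_cast this
  exact hnd (Int.natCast_dvd_natCast.mp ⟨c, by rw [hz]; ring⟩)

lemma eq_north_iff (t : ℝ) :
    lissajous m1 m2 α t = ((0:ℝ), (0:ℝ), (1:ℝ)) ↔ ∃ n : ℤ, (m2:ℝ)*t = 2*π*n := by
  constructor
  · intro h
    simp only [lissajous, Prod.mk.injEq] at h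
    obtain ⟨n, hn⟩ := (Real.cos_eq_one_iff _).1 h.2.2
    exact ⟨n, by linarith [hn]⟩
  · rintro ⟨n, hn⟩
    have hs : Real.sin ((m2:ℝ)*t) = 0 := by rw [hn]; exact sin_two_pi_int n
    have hc : Real.cos ((m2:ℝ)*t) = 1 := by rw [hn]; exact cos_two_pi_int n
    simp [lissajous, hs, hc]

lemma eq_south_iff (t : ℝ) :
    lissajous m1 m2 α t = ((0:ℝ), (0:ℝ), (-1:ℝ)) ↔ ∃ n : ℤ, (m2:ℝ)*t = π + 2*π*n := by
  constructor
  · intro h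
    simp only [lissajous, Prod.mk.injEq] at h
    obtain ⟨n, hn⟩ := Real.cos_eq_neg_one_iff.1 h.2.2
    exact ⟨n, by linarith [hn]⟩
  · rintro ⟨n, hn⟩
    have e : (m2:ℝ)*t = π + (n:ℝ)*(2*π) := by rw [hn]; ring
    have hs : Real.sin ((m2:ℝ)*t) = 0 := by
      rw [e, Real.sin_add_int_mul_two_pi, Real.sin_pi]
    have hc : Real.cos ((m2:ℝ)*t) = -1 := by
      rw [e, Real.cos_add_int_mul_two_pi, Real.cos_pi]
    simp [lissajous, hs, hc]

lemma bezout_odd {m2' : ℕ} (hm1odd : Odd m1) (hcop : Nat.Coprime m1 m2') (N : ℤ) :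
    ∃ k u : ℤ, Odd u ∧ N = m1*k + m2'*u := by
  obtain ⟨a, b, hab⟩ := (Nat.isCoprime_iff_coprime.2 hcop : IsCoprime (m1:ℤ) (m2':ℤ))
  rcases Int.even_or_odd (N*b) with he | ho
  · refine ⟨N*a - m2', N*b + m1, ?_, by linear_combination (-N) * hab⟩
    rcases he with ⟨c, hc⟩
    obtain ⟨d, hd⟩ := (by exact_mod_cast hm1odd : Odd (m1:ℤ))
    exact ⟨c + d, by omega⟩
  · exact ⟨N*a, N*b, ho, by linear_combination (-N) * hab⟩

lemma m1_odd (hgcd : Nat.gcd m1 m2 = 1) (heven : Even m2) : Odd m1 := by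
  rw [← Nat.not_even_iff_odd]
  intro h
  have h2 : 2 ∣ Nat.gcd m1 m2 := Nat.dvd_gcd h.two_dvd heven.two_dvd
  omega

/-- The trigonometric dichotomy at non-polar parameters. -/
lemma eq_nonpolar_iff (hm1 : 0 < m1) (hgcd : Nat.gcd m1 m2 = 1) {s t : ℝ} (hsin : Real.sin (m2 * t) ≠ 0) :
    lissajous m1 m2 α s = lissajous m1 m2 α t ↔
      ((∃ n : ℤ, (m2:ℝ)*(s-t) = 2*π*n) ∧ (∃ m : ℤ, (m1:ℝ)*(s-t) = 2*π*m)) ∨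
      ((∃ n : ℤ, (m2:ℝ)*(s+t) = 2*π*n) ∧ (∃ m : ℤ, (m1:ℝ)*(s-t) = π + 2*π*m)) := by
  constructor
  · intro h
    simp only [lissajous, Prod.mk.injEq] at h
    obtain ⟨h1, h2, h3⟩ := h
    have hsq : Real.sin (m2*s)^2 = Real.sin (m2*t)^2 := by
      rw [Real.sin_sq, Real.sin_sq, h3]
    have hcases : Real.sin (m2*s) = Real.sin (m2*t) ∨ Real.sin (m2*s) = -Real.sin (m2*t) := by
      have hfac : (Real.sin (m2*s) - Real.sin (m2*t)) * (Real.sin (m2*s) + Real.sin (m2*t)) = 0 := by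
        nlinarith [hsq]
      rcases mul_eq_zero.1 hfac with h | h
      · left; linarith
      · right; linarith
    rcases hcases with hss | hss
    · left
      have hc1 : Real.cos (m1*s - α*π) = Real.cos (m1*t - α*π) := by
        rw [hss] at h1
        exact mul_left_cancel₀ hsin h1
      have hc2 : Real.sin (m1*s - α*π) = Real.sin (m1*t - α*π) := by
        rw [hss] at h2
        exact mul_left_cancel₀ hsin h2
      obtain ⟨m, hm⟩ := cos_sin_inj hc1 hc2
      obtain ⟨n, hn⟩ := cos_sin_inj h3 hss
      exact ⟨⟨n, by rw [mul_sub]; linarith [hn]⟩, ⟨m, by rw [mul_sub]; linarith [hm]⟩⟩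
    · right
      have hcneg : Real.cos (m2*s) = Real.cos (-(m2*t)) := by rw [Real.cos_neg]; exact h3
      have hsneg : Real.sin (m2*s) = Real.sin (-(m2*t)) := by rw [Real.sin_neg]; exact hss
      obtain ⟨n, hn⟩ := cos_sin_inj hcneg hsneg
      refine ⟨⟨n, by rw [mul_add]; linarith [hn]⟩, ?_⟩
      have hc1 : Real.cos (m1*s - α*π) = Real.cos ((m1*t - α*π) + π) := by
        rw [Real.cos_add_pi]
        rw [hss] at h1
        have h1' : Real.sin (m2*t) * (- Real.cos (m1*s - α*π)) = Real.sin (m2*t) * Real.cos (m1*t - α*π) := by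
          linarith [h1]
        have := mul_left_cancel₀ hsin h1'
        linarith
      have hc2 : Real.sin (m1*s - α*π) = Real.sin ((m1*t - α*π) + π) := by
        rw [Real.sin_add_pi]
        rw [hss] at h2
        have h2' : Real.sin (m2*t) * (- Real.sin (m1*s - α*π)) = Real.sin (m2*t) * Real.sin (m1*t - α*π) := by
          linarith [h2]
        have := mul_left_cancel₀ hsin h2'
        linarith
      obtain ⟨m, hm⟩ := cos_sin_inj hc1 hc2
      exact ⟨m, by rw [mul_sub]; linarith [hm]⟩
  · rintro (⟨hn2, hm2'⟩ | ⟨⟨n, hn⟩, ⟨m, hm⟩⟩)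
    · obtain ⟨c, hc⟩ := gcd_step hm1 hgcd (s - t) hm2' hn2
      have hst : s = t + 2*π*c := by linarith
      rw [hst, periodic]
    · rw [mul_add] at hn
      rw [mul_sub] at hm
      have e1 : (m2:ℝ)*s = 2*π*n - m2*t := by linarith
      have e2 : (m1:ℝ)*s - α*π = ((m1:ℝ)*t - α*π + π) + (m:ℤ)*(2*π) := by push_cast; linarith
      have k1 : Real.sin ((m2:ℝ)*s) = - Real.sin ((m2:ℝ)*t) := by
        rw [e1, Real.sin_sub, sin_two_pi_int, cos_two_pi_int]; ring
      have k2 : Real.cos ((m2:ℝ)*s) = Real.cos ((m2:ℝ)*t) := by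
        rw [e1, Real.cos_sub, sin_two_pi_int, cos_two_pi_int]; ring
      have k3 : Real.cos ((m1:ℝ)*s - α*π) = - Real.cos ((m1:ℝ)*t - α*π) := by
        rw [e2, Real.cos_add_int_mul_two_pi, Real.cos_add_pi]
      have k4 : Real.sin ((m1:ℝ)*s - α*π) = - Real.sin ((m1:ℝ)*t - α*π) := by
        rw [e2, Real.sin_add_int_mul_two_pi, Real.sin_add_pi]
      simp only [lissajous, Prod.mk.injEq]
      refine ⟨by rw [k1, k3]; ring, by rw [k1, k4]; ring, k2⟩

lemma sin_m2_fpar_eq_zero (hm1 : 0 < m1) (hm2 : 0 < m2) {N : ℕ} (hd : m1 ∣ N) :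
    Real.sin ((m2:ℝ) * fpar m1 m2 N) = 0 := by
  obtain ⟨q, rfl⟩ := hd
  rw [m2_fpar hm1 hm2]
  have hm1r : (m1:ℝ) ≠ 0 := by exact_mod_cast hm1.ne'
  have : π * (↑(m1*q):ℝ) / m1 = q * π := by push_cast; field_simp
  rw [this, Real.sin_nat_mul_pi]

lemma partner (hm1 : 0 < m1) (hm2 : 0 < m2) (hgcd : Nat.gcd m1 m2 = 1) (heven : Even m2)
    {N : ℕ} (hN : N < 2*m1*m2) (hnd : ¬ m1 ∣ N) :
    ∃ s ∈ Set.Ico (0:ℝ) (2*π), s ≠ fpar m1 m2 N ∧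
      lissajous m1 m2 α s = lissajous m1 m2 α (fpar m1 m2 N) ∧
      (∃ n : ℤ, (m2:ℝ)*(s + fpar m1 m2 N) = 2*π*n) ∧
      (∃ m : ℤ, (m1:ℝ)*(s - fpar m1 m2 N) = π + 2*π*m) := by
  obtain ⟨m2', hm2e⟩ := id heven
  have hm2'pos : 0 < m2' := by omega
  have hcop : Nat.Coprime m1 m2' := Nat.Coprime.coprime_dvd_right ⟨2, by omega⟩ hgcd
  obtain ⟨k, u, hu, hrep⟩ := bezout_odd (m1_odd hgcd heven) hcop (N:ℤ)
  obtain ⟨j, hj⟩ := hu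
  set t := fpar m1 m2 N with htdef
  have hm1r : (m1:ℝ) ≠ 0 := by exact_mod_cast hm1.ne'
  have hm2r : (m2:ℝ) ≠ 0 := by exact_mod_cast hm2.ne'
  have hm2er : (m2:ℝ) = 2*m2' := by
    have : (m2:ℝ) = (m2':ℝ) + m2' := by exact_mod_cast hm2e
    linarith
  have hNr : (N:ℝ) = m1*k + m2'*u := by exact_mod_cast hrep
  have hur : (u:ℝ) = 2*j+1 := by exact_mod_cast hj
  set s0 : ℝ := t - u*π/m1 with hs0
  have htval : t = π * N / (m1*m2) := rfl
  have ht2 : (m1:ℝ)*(m2:ℝ)*t = π*N := by rw [htval]; field_simp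
  have c1 : (m2:ℝ)*(s0 + t) = 2*π*k := by
    apply mul_left_cancel₀ hm1r
    have hdiv : (m1:ℝ)*((u:ℝ)*π/m1) = u*π := by field_simp
    have hexp : (m1:ℝ)*((m2:ℝ)*(s0+t)) = (m1:ℝ)*(m2:ℝ)*t*2 - (m2:ℝ)*((m1:ℝ)*((u:ℝ)*π/m1)) := by
      rw [hs0]; ring
    rw [hexp, hdiv, ht2]
    linear_combination 2*π*hNr - (u:ℝ)*π*hm2er
  have c2 : (m1:ℝ)*(s0 - t) = π + 2*π*(-(j:ℝ)-1) := by
    have hexp : (m1:ℝ)*(s0 - t) = -((m1:ℝ)*((u:ℝ)*π/m1)) := by rw [hs0]; ring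
    have hdiv : (m1:ℝ)*((u:ℝ)*π/m1) = u*π := by field_simp
    rw [hexp, hdiv]
    linear_combination (-π)*hur
  set z := toIcoDiv Real.two_pi_pos 0 s0 with hzdef
  set s := toIcoMod Real.two_pi_pos 0 s0 with hsdef
  have hsIco : s ∈ Set.Ico (0:ℝ) (2*π) := toIcoMod_mem_Ico' Real.two_pi_pos s0
  have hz : s = s0 - z*(2*π) := by
    rw [hsdef, ← self_sub_toIcoDiv_zsmul Real.two_pi_pos 0 s0, zsmul_eq_mul, hzdef]
  have c1' : (m2:ℝ)*(s + t) = 2*π*((k - m2*z : ℤ):ℝ) := by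
    push_cast
    linear_combination c1 + (m2:ℝ)*hz
  have c2' : (m1:ℝ)*(s - t) = π + 2*π*((-j-1 - m1*z : ℤ):ℝ) := by
    push_cast
    linear_combination c2 + (m1:ℝ)*hz
  have hsin : Real.sin ((m2:ℝ)*t) ≠ 0 := sin_m2_fpar_ne hm1 hm2 hnd
  have hℓ : lissajous m1 m2 α s = lissajous m1 m2 α t :=
    (eq_nonpolar_iff α hm1 hgcd hsin).2 (Or.inr ⟨⟨_, c1'⟩, ⟨_, c2'⟩⟩)
  have hne : s ≠ t := by
    intro he
    rw [he, sub_self, mul_zero] at c2'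
    have hp0 : π * (1 + 2*((-j-1 - m1*z : ℤ):ℝ)) = 0 := by linear_combination -c2'
    rcases mul_eq_zero.1 hp0 with h | h
    · exact Real.pi_ne_zero h
    · have : (1 + 2*(-j-1 - m1*z) : ℤ) = 0 := by exact_mod_cast h
      omega
  exact ⟨s, hsIco, hne, hℓ, ⟨_, c1'⟩, ⟨_, c2'⟩⟩

lemma param_to_f (hm1 : 0 < m1) (hm2 : 0 < m2) (heven : Even m2)
    {t r : ℝ} (ht : t ∈ Set.Ico (0:ℝ) (2*π)) (hsin : Real.sin ((m2:ℝ)*t) ≠ 0)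
    (hc1 : ∃ n : ℤ, (m2:ℝ)*(r+t) = 2*π*n) (hc2 : ∃ m : ℤ, (m1:ℝ)*(r-t) = π + 2*π*m) :
    ∃ N : ℕ, N < 2*m1*m2 ∧ ¬ m1 ∣ N ∧ t = fpar m1 m2 N := by
  obtain ⟨n, hn⟩ := hc1
  obtain ⟨m, hm⟩ := hc2
  obtain ⟨m2', hm2e⟩ := id heven
  have hm1r : (m1:ℝ) ≠ 0 := by exact_mod_cast hm1.ne'
  have hm2r : (m2:ℝ) ≠ 0 := by exact_mod_cast hm2.ne'
  have hKpos : (0:ℝ) < (m1:ℝ)*(m2:ℝ) := by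
    have h1 : (0:ℝ) < (m1:ℝ) := by exact_mod_cast hm1
    have h2 : (0:ℝ) < (m2:ℝ) := by exact_mod_cast hm2
    positivity
  have hm2er : (m2:ℝ) = 2*m2' := by
    have : (m2:ℝ) = (m2':ℝ) + m2' := by exact_mod_cast hm2e
    linarith
  set Nz : ℤ := m1*n - m2'*(1+2*m) with hNzdef
  have key : t * ((m1:ℝ)*m2) = π * ((Nz:ℤ):ℝ) := by
    push_cast [hNzdef]
    linear_combination ((m1:ℝ)/2)*hn - ((m2:ℝ)/2)*hm - (π/2 + π*(m:ℝ))*hm2er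
  have hpi := Real.pi_pos
  have hNz0 : 0 ≤ Nz := by
    by_contra h
    push_neg at h
    have hr : ((Nz:ℤ):ℝ) < 0 := by exact_mod_cast h
    nlinarith [ht.1]
  have hNzlt : Nz < ((2*m1*m2 : ℕ) : ℤ) := by
    by_contra h
    push_neg at h
    have hr : ((2*m1*m2 : ℕ):ℝ) ≤ ((Nz:ℤ):ℝ) := by exact_mod_cast h
    push_cast at hr
    nlinarith [ht.2]
  refine ⟨Nz.toNat, ?_, ?_, ?_⟩
  · omega
  · intro hd
    have hteq : t = fpar m1 m2 Nz.toNat := by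
      unfold fpar
      rw [eq_div_iff hKpos.ne']
      rw [key]
      congr 1
      exact_mod_cast (Int.toNat_of_nonneg hNz0).symm
    rw [hteq] at hsin
    exact hsin (sin_m2_fpar_eq_zero hm1 hm2 hd)
  · unfold fpar
    rw [eq_div_iff hKpos.ne', key]
    congr 1
    exact_mod_cast (Int.toNat_of_nonneg hNz0).symm

lemma partner_unique (hm1 : 0 < m1) (hgcd : Nat.gcd m1 m2 = 1) {t r r' : ℝ}
    (hr : r ∈ Set.Ico (0:ℝ) (2*π)) (hr' : r' ∈ Set.Ico (0:ℝ) (2*π))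
    (h1 : ∃ n : ℤ, (m2:ℝ)*(r+t) = 2*π*n) (h2 : ∃ m : ℤ, (m1:ℝ)*(r-t) = π + 2*π*m)
    (h1' : ∃ n : ℤ, (m2:ℝ)*(r'+t) = 2*π*n) (h2' : ∃ m : ℤ, (m1:ℝ)*(r'-t) = π + 2*π*m) :
    r = r' := by
  obtain ⟨n, hn⟩ := h1; obtain ⟨m, hm⟩ := h2
  obtain ⟨n', hn'⟩ := h1'; obtain ⟨m', hm'⟩ := h2'
  apply Ico_unique hr hr'
  apply gcd_step hm1 hgcd (r - r')
  · exact ⟨m - m', by push_cast; linear_combination hm - hm'⟩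
  · exact ⟨n - n', by push_cast; linear_combination hn - hn'⟩

lemma paramSet_pair (hm1 : 0 < m1) (hm2 : 0 < m2) (hgcd : Nat.gcd m1 m2 = 1)
    (heven : Even m2) {N : ℕ} (hN : N < 2*m1*m2) (hnd : ¬ m1 ∣ N) :
    ∃ s, s ≠ fpar m1 m2 N ∧ s ∈ Set.Ico (0:ℝ) (2*π) ∧
      lissajous m1 m2 α s = lissajous m1 m2 α (fpar m1 m2 N) ∧
      (∃ n : ℤ, (m2:ℝ)*(s + fpar m1 m2 N) = 2*π*n) ∧
      (∃ m : ℤ, (m1:ℝ)*(s - fpar m1 m2 N) = π + 2*π*m) ∧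
      paramSet m1 m2 α (lissajous m1 m2 α (fpar m1 m2 N)) = {fpar m1 m2 N, s} := by
  obtain ⟨s, hsIco, hne, hℓ, hcong1, hcong2⟩ := partner (α := α) hm1 hm2 hgcd heven hN hnd
  refine ⟨s, hne, hsIco, hℓ, hcong1, hcong2, ?_⟩
  have htIco := fpar_mem hm1 hm2 hN
  have hsin := sin_m2_fpar_ne hm1 hm2 hnd
  ext r
  simp only [paramSet, Set.mem_setOf_eq, Set.mem_insert_iff, Set.mem_singleton_iff,
    Set.mem_sep_iff]
  constructor
  · rintro ⟨hrIco, hre⟩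
    rcases (eq_nonpolar_iff α hm1 hgcd hsin).1 hre with ⟨hn2, hm2'⟩ | ⟨hc1, hc2⟩
    · left; exact Ico_unique hrIco htIco (gcd_step hm1 hgcd _ hm2' hn2)
    · right; exact partner_unique hm1 hgcd hrIco hsIco hc1 hc2 hcong1 hcong2
  · rintro (rfl | rfl)
    · exact ⟨htIco, rfl⟩
    · exact ⟨hsIco, hℓ⟩

def Dfin (m1 m2 : ℕ) : Finset ℕ := (Finset.range (2*m1*m2)).filter (fun N => ¬ m1 ∣ N)

lemma mem_Dfin {N : ℕ} : N ∈ Dfin m1 m2 ↔ N < 2*m1*m2 ∧ ¬ m1 ∣ N := by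
  simp [Dfin, Finset.mem_filter, Finset.mem_range]

lemma Dfin_card (hm1 : 0 < m1) (hm2 : 0 < m2) : (Dfin m1 m2).card = 2*(m2*(m1-1)) := by
  have h := Finset.card_filter_add_card_filter_not
    (s := Finset.range (2*m1*m2)) (p := fun N => m1 ∣ N)
  have himg : (Finset.range (2*m1*m2)).filter (fun N => m1 ∣ N)
      = (Finset.range (2*m2)).image (fun q => m1*q) := by
    ext x
    simp only [Finset.mem_filter, Finset.mem_range, Finset.mem_image]
    constructor
    · rintro ⟨hx, q, rfl⟩
      refine ⟨q, ?_, rfl⟩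
      have e : 2*m1*m2 = m1*(2*m2) := by ring
      rw [e] at hx
      exact Nat.lt_of_mul_lt_mul_left hx
    · rintro ⟨q, hq, rfl⟩
      exact ⟨by nlinarith, ⟨q, rfl⟩⟩
  rw [himg, Finset.card_image_of_injective _ (fun a b hab => by
      exact Nat.eq_of_mul_eq_mul_left hm1 hab), Finset.card_range, Finset.card_range] at h
  have hD : (Dfin m1 m2).card = 2*m1*m2 - 2*m2 := by
    unfold Dfin; omega
  obtain ⟨k, rfl⟩ : ∃ k, m1 = k + 1 := ⟨m1 - 1, by omega⟩
  have : 2*(k+1)*m2 = 2*m2 + 2*(m2*k) := by ring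
  simp only [hD, Nat.add_sub_cancel]
  omega

lemma f_card (hm1 : 0 < m1) (hm2 : 0 < m2) (hgcd : Nat.gcd m1 m2 = 1)
    (heven : Even m2) {N : ℕ} (hN : N < 2*m1*m2) (hnd : ¬ m1 ∣ N) :
    (paramSet m1 m2 α (lissajous m1 m2 α (fpar m1 m2 N))).ncard = 2 := by
  obtain ⟨s, hne, _, _, _, _, hps⟩ := paramSet_pair (α := α) hm1 hm2 hgcd heven hN hnd
  rw [hps]
  exact Set.ncard_pair (Ne.symm hne)

lemma g_mem_SI (hm1 : 0 < m1) (hm2 : 0 < m2) (hgcd : Nat.gcd m1 m2 = 1)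
    (heven : Even m2) {N : ℕ} (hN : N < 2*m1*m2) (hnd : ¬ m1 ∣ N) :
    lissajous m1 m2 α (fpar m1 m2 N) ∈ selfIntersections m1 m2 α := by
  refine ⟨⟨fpar m1 m2 N, fpar_mem hm1 hm2 hN, rfl⟩, ?_⟩
  rw [f_card (α := α) hm1 hm2 hgcd heven hN hnd]

lemma g_ne_north (hm1 : 0 < m1) (hm2 : 0 < m2) {N : ℕ} (hnd : ¬ m1 ∣ N) :
    lissajous m1 m2 α (fpar m1 m2 N) ≠ ((0:ℝ),(0:ℝ),(1:ℝ)) := by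
  intro h
  obtain ⟨n, hn⟩ := (eq_north_iff α _).1 h
  apply sin_m2_fpar_ne hm1 hm2 hnd
  rw [hn]; exact sin_two_pi_int n

lemma g_ne_south (hm1 : 0 < m1) (hm2 : 0 < m2) {N : ℕ} (hnd : ¬ m1 ∣ N) :
    lissajous m1 m2 α (fpar m1 m2 N) ≠ ((0:ℝ),(0:ℝ),(-1:ℝ)) := by
  intro h
  obtain ⟨n, hn⟩ := (eq_south_iff α _).1 h
  apply sin_m2_fpar_ne hm1 hm2 hnd
  have e : (m2:ℝ) * fpar m1 m2 N = π + (n:ℝ)*(2*π) := by rw [hn]; ring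
  rw [e, Real.sin_add_int_mul_two_pi, Real.sin_pi]

lemma exists_other {x : ℝ×ℝ×ℝ} (hx : 2 ≤ (paramSet m1 m2 α x).ncard) {t : ℝ}
    (ht : t ∈ paramSet m1 m2 α x) :
    ∃ r ∈ paramSet m1 m2 α x, r ≠ t := by
  have hfin : (paramSet m1 m2 α x).Finite := by
    by_contra h
    rw [Set.Infinite.ncard h] at hx
    omega
  obtain ⟨a, b, ha, hb, hab⟩ := (Set.one_lt_ncard_iff hfin).1 (by omega)
  by_cases hat : a = t
  · exact ⟨b, hb, fun hbt => hab (by rw [hat, hbt])⟩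
  · exact ⟨a, ha, hat⟩

lemma polar_case {t : ℝ} (hs : Real.sin ((m2:ℝ)*t) = 0) :
    lissajous m1 m2 α t = ((0:ℝ),(0:ℝ),(1:ℝ)) ∨ lissajous m1 m2 α t = ((0:ℝ),(0:ℝ),(-1:ℝ)) := by
  have hsq : (1 - Real.cos ((m2:ℝ)*t)) * (1 + Real.cos ((m2:ℝ)*t)) = 0 := by
    have := Real.sin_sq_add_cos_sq ((m2:ℝ)*t)
    nlinarith [hs]
  rcases mul_eq_zero.1 hsq with h | h
  · left; simp [lissajous, hs, show Real.cos ((m2:ℝ)*t) = 1 by linarith]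
  · right; simp [lissajous, hs, show Real.cos ((m2:ℝ)*t) = -1 by linarith]

lemma fiber_eq (hm1 : 0 < m1) (hm2 : 0 < m2) (hgcd : Nat.gcd m1 m2 = 1)
    (heven : Even m2) {N₀ : ℕ} (h0 : N₀ ∈ Dfin m1 m2) :
    paramSet m1 m2 α (lissajous m1 m2 α (fpar m1 m2 N₀)) =
      fpar m1 m2 '' ↑((Dfin m1 m2).filter
        (fun N => lissajous m1 m2 α (fpar m1 m2 N) = lissajous m1 m2 α (fpar m1 m2 N₀))) := by
  obtain ⟨hN₀lt, hnd₀⟩ := mem_Dfin.1 h0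
  apply Set.Subset.antisymm
  · intro r hr
    obtain ⟨s, hne, hsIco, hℓ, hcg1, hcg2, hps⟩ :=
      paramSet_pair (α := α) hm1 hm2 hgcd heven hN₀lt hnd₀
    rw [hps] at hr
    rcases hr with rfl | rfl
    · exact ⟨N₀, by simp [Finset.mem_filter, h0], rfl⟩
    · have hsin_s : Real.sin ((m2:ℝ)*r) ≠ 0 := by
        have hsin₀ := sin_m2_fpar_ne hm1 hm2 hnd₀
        intro h
        apply hsin₀
        have h3 : Real.cos ((m2:ℝ)*r) = Real.cos ((m2:ℝ)*fpar m1 m2 N₀) := by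
          have := congrArg (fun p => p.2.2) hℓ
          simpa [lissajous] using this
        have h4 : Real.sin ((m2:ℝ)*fpar m1 m2 N₀)^2 = 0 := by
          rw [Real.sin_sq, ← h3, ← Real.sin_sq, h]; ring
        exact sq_eq_zero_iff.1 h4
      have hc1' : ∃ n : ℤ, (m2:ℝ)*(fpar m1 m2 N₀ + r) = 2*π*n := by
        obtain ⟨n, hn⟩ := hcg1
        exact ⟨n, by linarith [hn]⟩
      have hc2' : ∃ m : ℤ, (m1:ℝ)*(fpar m1 m2 N₀ - r) = π + 2*π*m := by
        obtain ⟨m, hm⟩ := hcg2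
        exact ⟨-m-1, by push_cast; linarith [hm]⟩
      obtain ⟨N₁, hlt, hnd₁, hseq⟩ := param_to_f hm1 hm2 heven hsIco hsin_s hc1' hc2'
      refine ⟨N₁, ?_, hseq.symm⟩
      simp only [Finset.coe_filter, Set.mem_setOf_eq, mem_Dfin]
      exact ⟨⟨hlt, hnd₁⟩, by rw [← hseq]; exact hℓ⟩
  · rintro r ⟨N, hNf, rfl⟩
    simp only [Finset.coe_filter, Set.mem_setOf_eq, mem_Dfin] at hNf
    exact ⟨fpar_mem hm1 hm2 hNf.1.1, hNf.2⟩

lemma fiber_card (hm1 : 0 < m1) (hm2 : 0 < m2) (hgcd : Nat.gcd m1 m2 = 1)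
    (heven : Even m2) {N₀ : ℕ} (h0 : N₀ ∈ Dfin m1 m2) :
    ((Dfin m1 m2).filter
      (fun N => lissajous m1 m2 α (fpar m1 m2 N) = lissajous m1 m2 α (fpar m1 m2 N₀))).card = 2 := by
  obtain ⟨hN₀lt, hnd₀⟩ := mem_Dfin.1 h0
  have h2 := f_card (α := α) hm1 hm2 hgcd heven hN₀lt hnd₀
  rw [fiber_eq (α := α) hm1 hm2 hgcd heven h0] at h2
  rw [Set.ncard_image_of_injOn (fun a _ b _ hab => fpar_inj hm1 hm2 hab),
    Set.ncard_coe_finset] at h2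
  exact h2

lemma Pfin_card (hm1 : 0 < m1) (hm2 : 0 < m2) (hgcd : Nat.gcd m1 m2 = 1)
    (heven : Even m2) :
    ((Dfin m1 m2).image (fun N => lissajous m1 m2 α (fpar m1 m2 N))).card = m2*(m1-1) := by
  have hsum := Finset.card_eq_sum_card_image
    (fun N => lissajous m1 m2 α (fpar m1 m2 N)) (Dfin m1 m2)
  rw [Dfin_card hm1 hm2] at hsum
  have hconst : ∀ x ∈ (Dfin m1 m2).image (fun N => lissajous m1 m2 α (fpar m1 m2 N)),
      ((Dfin m1 m2).filter (fun N => lissajous m1 m2 α (fpar m1 m2 N) = x)).card = 2 := by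
    intro x hx
    obtain ⟨N₀, h0, rfl⟩ := Finset.mem_image.1 hx
    exact fiber_card (α := α) hm1 hm2 hgcd heven h0
  rw [Finset.sum_congr rfl hconst, Finset.sum_const, smul_eq_mul] at hsum
  omega

lemma m2_ge_two (hm2 : 0 < m2) (heven : Even m2) : 2 ≤ m2 := by
  obtain ⟨c, rfl⟩ := heven; omega

lemma paramSet_north_eq (hm2 : 0 < m2) :
    paramSet m1 m2 α ((0:ℝ),(0:ℝ),(1:ℝ)) = (fun k : ℕ => 2*π*k/m2) '' ↑(Finset.range m2) := by
  have hpi := Real.pi_pos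
  have hm2r : (0:ℝ) < (m2:ℝ) := by exact_mod_cast hm2
  ext r
  simp only [paramSet, Set.mem_sep_iff, Set.mem_image, Finset.coe_range, Set.mem_Iio,
    Set.mem_Ico]
  constructor
  · rintro ⟨hIco, hl⟩
    obtain ⟨n, hn⟩ := (eq_north_iff α r).1 hl
    have hr : r = 2*π*n/m2 := by rw [eq_div_iff hm2r.ne']; linarith [hn]
    have hn0 : (0:ℝ) ≤ (n:ℝ) := by nlinarith [hIco.1, hn]
    have hnm : (n:ℝ) < m2 := by nlinarith [hIco.2, hn]
    have hn0' : 0 ≤ n := by exact_mod_cast hn0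
    have hc : ((n.toNat:ℕ):ℝ) = (n:ℝ) := by exact_mod_cast Int.toNat_of_nonneg hn0'
    refine ⟨n.toNat, ?_, ?_⟩
    · have : ((n.toNat:ℕ):ℝ) < m2 := by rw [hc]; exact hnm
      exact_mod_cast this
    · rw [hr, ← hc]
  · rintro ⟨k, hk, rfl⟩
    have hkr : (k:ℝ) < m2 := by exact_mod_cast hk
    refine ⟨⟨by positivity, ?_⟩, (eq_north_iff α _).2 ⟨(k:ℤ), by push_cast; field_simp⟩⟩
    rw [div_lt_iff₀ hm2r]
    nlinarith

lemma north_card (hm2 : 0 < m2) : (paramSet m1 m2 α ((0:ℝ),(0:ℝ),(1:ℝ))).ncard = m2 := by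
  have hpi := Real.pi_ne_zero
  have hm2r : (0:ℝ) < (m2:ℝ) := by exact_mod_cast hm2
  rw [paramSet_north_eq (α := α) hm2,
    Set.ncard_image_of_injOn (fun a _ b _ hab => ?_), Set.ncard_coe_finset, Finset.card_range]
  have h1 : 2*π*(a:ℝ) = 2*π*b := by
    have := congrArg (fun y : ℝ => y * m2) hab
    simpa [div_mul_cancel₀, hm2r.ne'] using this
  have h2 : (a:ℝ) = b := by
    have h2pi : (2*π) ≠ 0 := by positivity
    have := mul_left_cancel₀ h2pi (by linarith [h1] : 2*π*(a:ℝ) = 2*π*(b:ℝ))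
    exact this
  exact_mod_cast h2

lemma paramSet_south_eq (hm2 : 0 < m2) :
    paramSet m1 m2 α ((0:ℝ),(0:ℝ),(-1:ℝ)) = (fun k : ℕ => (2*k+1)*π/m2) '' ↑(Finset.range m2) := by
  have hpi := Real.pi_pos
  have hm2r : (0:ℝ) < (m2:ℝ) := by exact_mod_cast hm2
  ext r
  simp only [paramSet, Set.mem_sep_iff, Set.mem_image, Finset.coe_range, Set.mem_Iio,
    Set.mem_Ico]
  constructor
  · rintro ⟨hIco, hl⟩
    obtain ⟨n, hn⟩ := (eq_south_iff α r).1 hl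
    have hr : r = (2*n+1)*π/m2 := by rw [eq_div_iff hm2r.ne']; linarith [hn]
    have hn0 : (0:ℝ) ≤ 1+2*(n:ℝ) := by nlinarith [hIco.1, hn]
    have hnm : (1:ℝ)+2*(n:ℝ) < 2*m2 := by nlinarith [hIco.2, hn]
    have hn0' : 0 ≤ n := by
      have : (0:ℤ) ≤ 1+2*n := by exact_mod_cast hn0
      omega
    have hnm' : n < (m2:ℤ) := by
      have : (1:ℤ)+2*n < 2*m2 := by exact_mod_cast hnm
      omega
    have hc : ((n.toNat:ℕ):ℝ) = (n:ℝ) := by exact_mod_cast Int.toNat_of_nonneg hn0'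
    refine ⟨n.toNat, ?_, ?_⟩
    · have : ((n.toNat:ℕ):ℝ) < m2 := by rw [hc]; exact_mod_cast hnm'
      exact_mod_cast this
    · rw [hr, ← hc]
  · rintro ⟨k, hk, rfl⟩
    have hkr : (k:ℝ) < m2 := by exact_mod_cast hk
    refine ⟨⟨by positivity, ?_⟩, (eq_south_iff α _).2 ⟨(k:ℤ), by push_cast; field_simp; ring⟩⟩
    rw [div_lt_iff₀ hm2r]
    have hk1 : (k:ℝ)+1 ≤ m2 := by exact_mod_cast hk
    nlinarith

lemma south_card (hm2 : 0 < m2) : (paramSet m1 m2 α ((0:ℝ),(0:ℝ),(-1:ℝ))).ncard = m2 := by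
  have hpi := Real.pi_ne_zero
  have hm2r : (0:ℝ) < (m2:ℝ) := by exact_mod_cast hm2
  rw [paramSet_south_eq (α := α) hm2,
    Set.ncard_image_of_injOn (fun a _ b _ hab => ?_), Set.ncard_coe_finset, Finset.card_range]
  have h1 : (2*(a:ℝ)+1)*π = (2*b+1)*π := by
    have := congrArg (fun y : ℝ => y * m2) hab
    simpa [div_mul_cancel₀, hm2r.ne'] using this
  have h2 : (2*(a:ℝ)+1) = (2*b+1) := mul_right_cancel₀ hpi h1
  have h3 : (a:ℝ) = b := by linarith
  exact_mod_cast h3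

lemma north_mem_SI (hm2 : 0 < m2) (heven : Even m2) :
    ((0:ℝ),(0:ℝ),(1:ℝ)) ∈ selfIntersections m1 m2 α := by
  constructor
  · exact ⟨0, ⟨le_refl 0, Real.two_pi_pos⟩, (eq_north_iff α 0).2 ⟨0, by simp⟩⟩
  · rw [north_card (α := α) hm2]; exact m2_ge_two hm2 heven

lemma south_mem_SI (hm2 : 0 < m2) (heven : Even m2) :
    ((0:ℝ),(0:ℝ),(-1:ℝ)) ∈ selfIntersections m1 m2 α := by
  have hpi := Real.pi_pos
  have hm2r : (0:ℝ) < (m2:ℝ) := by exact_mod_cast hm2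
  have hm2r1 : (1:ℝ) ≤ (m2:ℝ) := by exact_mod_cast hm2
  constructor
  · refine ⟨π/m2, ⟨by positivity, ?_⟩, (eq_south_iff α _).2 ⟨0, by push_cast; field_simp; ring⟩⟩
    rw [div_lt_iff₀ hm2r]
    nlinarith
  · rw [south_card (α := α) hm2]; exact m2_ge_two hm2 heven

lemma SI_eq (hm1 : 0 < m1) (hm2 : 0 < m2) (hgcd : Nat.gcd m1 m2 = 1) (heven : Even m2) :
    selfIntersections m1 m2 α =
      ↑(insert ((0:ℝ),(0:ℝ),(1:ℝ)) (insert ((0:ℝ),(0:ℝ),(-1:ℝ))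
        ((Dfin m1 m2).image (fun N => lissajous m1 m2 α (fpar m1 m2 N))))) := by
  apply Set.eq_of_subset_of_subset
  · intro x hx
    obtain ⟨⟨t, htIco, htx⟩, hcard⟩ := hx
    simp only [Finset.coe_insert, Set.mem_insert_iff, Finset.mem_coe, Finset.mem_image]
    by_cases hsin : Real.sin ((m2:ℝ)*t) = 0
    · rcases polar_case (α := α) hsin with h | h
      · left; rw [← htx, h]
      · right; left; rw [← htx, h]
    · obtain ⟨r, hr, hrt⟩ := exists_other (α := α) hcard ⟨htIco, htx⟩
      obtain ⟨hrIco, hrx⟩ := hr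
      have hre : lissajous m1 m2 α r = lissajous m1 m2 α t := by rw [hrx, ← htx]
      rcases (eq_nonpolar_iff α hm1 hgcd hsin).1 hre with ⟨hn2, hm2'⟩ | ⟨hc1, hc2⟩
      · exact absurd (Ico_unique hrIco htIco (gcd_step hm1 hgcd _ hm2' hn2)) hrt
      · obtain ⟨N, hNlt, hnd, hteq⟩ := param_to_f hm1 hm2 heven htIco hsin hc1 hc2
        exact Or.inr (Or.inr ⟨N, mem_Dfin.2 ⟨hNlt, hnd⟩, by rw [← hteq]; exact htx⟩)
  · intro x hx
    simp only [Finset.coe_insert, Set.mem_insert_iff, Finset.mem_coe, Finset.mem_image] at hx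
    rcases hx with rfl | rfl | ⟨N, hN, rfl⟩
    · exact north_mem_SI (α := α) hm2 heven
    · exact south_mem_SI (α := α) hm2 heven
    · obtain ⟨hlt, hnd⟩ := mem_Dfin.1 hN
      exact g_mem_SI (α := α) hm1 hm2 hgcd heven hlt hnd

end Main

end LissAux

theorem stmt4 (m1 m2 : ℕ) (hm1 : 0 < m1) (hm2 : 0 < m2)
    (hgcd : Nat.gcd m1 m2 = 1) (heven : Even m2) (α : ℝ) :
    Set.ncard (selfIntersections m1 m2 α) = m2 * (m1 - 1) + 2 ∧
    ((0:ℝ), (0:ℝ), (1:ℝ)) ∈ selfIntersections m1 m2 α ∧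
    ((0:ℝ), (0:ℝ), (-1:ℝ)) ∈ selfIntersections m1 m2 α ∧
    Set.ncard (paramSet m1 m2 α ((0:ℝ), (0:ℝ), (1:ℝ))) = m2 ∧
    Set.ncard (paramSet m1 m2 α ((0:ℝ), (0:ℝ), (-1:ℝ))) = m2 ∧
    Set.ncard (selfIntersections m1 m2 α \
      {((0:ℝ), (0:ℝ), (1:ℝ)), ((0:ℝ), (0:ℝ), (-1:ℝ))}) = m2 * (m1 - 1) ∧
    (∀ x ∈ selfIntersections m1 m2 α,
      x ≠ ((0:ℝ), (0:ℝ), (1:ℝ)) → x ≠ ((0:ℝ), (0:ℝ), (-1:ℝ)) →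
      Set.ncard (paramSet m1 m2 α x) = 2) := by
  classical
  have hSI := LissAux.SI_eq (α := α) hm1 hm2 hgcd heven
  set north : ℝ×ℝ×ℝ := ((0:ℝ),(0:ℝ),(1:ℝ)) with hnorth
  set south : ℝ×ℝ×ℝ := ((0:ℝ),(0:ℝ),(-1:ℝ)) with hsouth
  set Pfin := (LissAux.Dfin m1 m2).image
    (fun N => lissajous m1 m2 α (LissAux.fpar m1 m2 N)) with hP
  have hns : north ≠ south := by
    simp only [hnorth, hsouth, ne_eq, Prod.mk.injEq]
    norm_num
  have hnP : north ∉ Pfin := by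
    intro h
    obtain ⟨N, hN, hE⟩ := Finset.mem_image.1 h
    exact LissAux.g_ne_north (α := α) hm1 hm2 (LissAux.mem_Dfin.1 hN).2 hE
  have hsP : south ∉ Pfin := by
    intro h
    obtain ⟨N, hN, hE⟩ := Finset.mem_image.1 h
    exact LissAux.g_ne_south (α := α) hm1 hm2 (LissAux.mem_Dfin.1 hN).2 hE
  have hnotin : north ∉ insert south Pfin := by
    simp only [Finset.mem_insert]
    push_neg
    exact ⟨hns, hnP⟩
  have hmemP : ∀ x ∈ selfIntersections m1 m2 α, x ≠ north → x ≠ south → x ∈ Pfin := by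
    intro x hx hxn hxs
    rw [hSI] at hx
    simp only [Finset.coe_insert, Set.mem_insert_iff, Finset.mem_coe] at hx
    rcases hx with rfl | rfl | h
    · exact absurd rfl hxn
    · exact absurd rfl hxs
    · exact h
  refine ⟨?_, ?_, ?_, ?_, ?_, ?_, ?_⟩
  · rw [hSI, Set.ncard_coe_finset, Finset.card_insert_of_notMem hnotin,
      Finset.card_insert_of_notMem hsP, hP,
      LissAux.Pfin_card (α := α) hm1 hm2 hgcd heven]
  · exact LissAux.north_mem_SI (α := α) hm2 heven
  · exact LissAux.south_mem_SI (α := α) hm2 heven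
  · exact LissAux.north_card (α := α) hm2
  · exact LissAux.south_card (α := α) hm2
  · have hdiff : selfIntersections m1 m2 α \ {north, south} = ↑Pfin := by
      ext x
      constructor
      · rintro ⟨h1, h2⟩
        simp only [Set.mem_insert_iff, Set.mem_singleton_iff] at h2
        push_neg at h2
        exact hmemP x h1 h2.1 h2.2
      · intro h
        obtain ⟨N, hN, hE⟩ := Finset.mem_image.1 h
        obtain ⟨hlt, hnd⟩ := LissAux.mem_Dfin.1 hN
        refine ⟨by rw [hSI]; simp only [Finset.coe_insert, Set.mem_insert_iff,
          Finset.mem_coe]; exact Or.inr (Or.inr h), ?_⟩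
        simp only [Set.mem_insert_iff, Set.mem_singleton_iff]
        push_neg
        constructor
        · rw [← hE]; exact LissAux.g_ne_north (α := α) hm1 hm2 hnd
        · rw [← hE]; exact LissAux.g_ne_south (α := α) hm1 hm2 hnd
    rw [hdiff, Set.ncard_coe_finset, hP, LissAux.Pfin_card (α := α) hm1 hm2 hgcd heven]
  · intro x hx hxn hxs
    obtain ⟨N, hN, hE⟩ := Finset.mem_image.1 (hmemP x hx hxn hxs)
    obtain ⟨hlt, hnd⟩ := LissAux.mem_Dfin.1 hN
    rw [← hE]
    exact LissAux.f_card (α := α) hm1 hm2 hgcd heven hlt hnd
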